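/- arXiv:1805.11955 — 3 statements merged into one kernel-verified Lean document; each statement's English description precedes it below -/
import Mathlib

section
/- Let S be an inverse semigroup and let R be a system over S that is coherent and left (or right) s-unital epsilon-strong. Then R is left (respectively right) non-degenerate, and the ring extension R / C_R(Z(R_0)) has the ideal intersection property, i.e. every nonzero ideal of R has nonzero intersection with C_R(Z(R_0)). -/
open Pointwise

namespace PaperSys

variable {S R : Type*} [Semigroup S] [NonUnitalRing R]

/-- The additive subgroup of finite sums of products `a * b` with `a ∈ A`, `b ∈ B`. -/
def sumProd (A B : AddSubgroup R) : AddSubgroup R :=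
  AddSubgroup.closure ((A : Set R) * (B : Set R))

/-- `𝓡` is a system over the semigroup `S` on the ring `R`:
`R = Σ_{s ∈ S} R_s` and `R_s R_t ⊆ R_{st}`. -/
def IsSystem (𝓡 : S → AddSubgroup R) : Prop :=
  (⨆ s : S, 𝓡 s) = (⊤ : AddSubgroup R) ∧
    ∀ s t : S, ∀ x ∈ 𝓡 s, ∀ y ∈ 𝓡 t, x * y ∈ 𝓡 (s * t)

/-- `R₀ = Σ_{e ∈ E(S)} R_e`. -/
def sysZero (𝓡 : S → AddSubgroup R) : AddSubgroup R :=
  ⨆ e ∈ {e : S | e * e = e}, 𝓡 e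

/-- `I` is a two-sided ideal of the (possibly non-unital) ring `R`. -/
def IsRingIdeal (I : AddSubgroup R) : Prop :=
  ∀ r : R, ∀ x ∈ I, r * x ∈ I ∧ x * r ∈ I

/-- `I` is a system ideal: an ideal with `I = Σ_{s ∈ S} (I ∩ R_s)`. -/
def IsSystemIdeal (𝓡 : S → AddSubgroup R) (I : AddSubgroup R) : Prop :=
  IsRingIdeal I ∧ I = ⨆ s : S, (I ⊓ 𝓡 s)

/-- `R` is system simple: `{0}` and `R` are the only system ideals. -/
def SystemSimple (𝓡 : S → AddSubgroup R) : Prop :=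
  ∀ I : AddSubgroup R, IsSystemIdeal 𝓡 I → I = ⊥ ∨ I = ⊤

/-- `R` is a simple ring: `{0}` and `R` are the only two-sided ideals. -/
def RingSimple (R' : Type*) [NonUnitalRing R'] : Prop :=
  ∀ I : AddSubgroup R', IsRingIdeal I → I = ⊥ ∨ I = ⊤

/-- `Z(R₀)` as a subset of `R`. -/
def centerZero (𝓡 : S → AddSubgroup R) : Set R :=
  {z : R | z ∈ sysZero 𝓡 ∧ ∀ y ∈ sysZero 𝓡, z * y = y * z}

/-- `C_R(Z(R₀))` as a subset of `R`. -/
def centCenterZero (𝓡 : S → AddSubgroup R) : Set R :=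
  {x : R | ∀ z ∈ centerZero 𝓡, x * z = z * x}

/-- The system is idempotent coherent: `R₀ R_s ⊆ R_s` and `R_s R₀ ⊆ R_s`. -/
def IdemCoherent (𝓡 : S → AddSubgroup R) : Prop :=
  ∀ s : S, (∀ x ∈ sysZero 𝓡, ∀ y ∈ 𝓡 s, x * y ∈ 𝓡 s) ∧
    (∀ x ∈ sysZero 𝓡, ∀ y ∈ 𝓡 s, y * x ∈ 𝓡 s)

/-- The system is left non-degenerate. -/
def LeftNonDeg (𝓡 : S → AddSubgroup R) : Prop :=
  ∀ e : S, e * e = e → ∀ r ∈ 𝓡 e, r ≠ 0 →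
    ∃ t : S, (t * e) * (t * e) = t * e ∧ ∃ x ∈ 𝓡 t, x * r ≠ 0

/-- The system is right non-degenerate. -/
def RightNonDeg (𝓡 : S → AddSubgroup R) : Prop :=
  ∀ e : S, e * e = e → ∀ r ∈ 𝓡 e, r ≠ 0 →
    ∃ t : S, (e * t) * (e * t) = e * t ∧ ∃ x ∈ 𝓡 t, r * x ≠ 0

/-- `star` makes the semigroup `S` an inverse semigroup: `s (s*) s = s`,
`(s*) s (s*) = s*`, and `s*` is the unique such element. -/
def IsInverseStar (star : S → S) : Prop :=
  (∀ s : S, s * star s * s = s) ∧ (∀ s : S, star s * s * star s = star s) ∧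
    ∀ s t : S, s * t * s = s → t * s * t = t → t = star s

/-- Coherent: `s ≤ t` (i.e. `s = t s* s`) implies `R_s ⊆ R_t`. -/
def Coherent (star : S → S) (𝓡 : S → AddSubgroup R) : Prop :=
  ∀ s t : S, s = t * star s * s → 𝓡 s ≤ 𝓡 t

/-- Left s-unital epsilon-strong. -/
def LeftSEps (star : S → S) (𝓡 : S → AddSubgroup R) : Prop :=
  ∀ s : S, ∀ r ∈ 𝓡 s, ∃ ε ∈ sumProd (𝓡 s) (𝓡 (star s)), ε * r = r

/-- Right s-unital epsilon-strong. -/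
def RightSEps (star : S → S) (𝓡 : S → AddSubgroup R) : Prop :=
  ∀ s : S, ∀ r ∈ 𝓡 s, ∃ ε ∈ sumProd (𝓡 (star s)) (𝓡 s), r * ε = r

/-- Symmetric: `R_s R_{s*} R_s = R_s` for all `s`. -/
def IsSymmetricSys (star : S → S) (𝓡 : S → AddSubgroup R) : Prop :=
  ∀ s : S, sumProd (sumProd (𝓡 s) (𝓡 (star s))) (𝓡 s) = 𝓡 s

/-- The ring extension `R / C_R(Z(R₀))` has the ideal intersection property. -/
def IIPCentCenterZero (𝓡 : S → AddSubgroup R) : Prop :=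
  ∀ I : AddSubgroup R, IsRingIdeal I → I ≠ ⊥ →
    ∃ x : R, x ≠ 0 ∧ x ∈ I ∧ x ∈ centCenterZero 𝓡

/-- `R₀` is a maximal commutative subring of `R`: `C_R(R₀) = R₀`. -/
def MaxCommZero (𝓡 : S → AddSubgroup R) : Prop :=
  {x : R | ∀ y ∈ sysZero 𝓡, x * y = y * x} = (sysZero 𝓡 : Set R)


section Lemmas
variable {S R : Type*} [Semigroup S] [NonUnitalRing R]

section SG
variable {star : S → S} (hstar : IsInverseStar star)
include hstar

lemma star_idem {e : S} (he : e * e = e) : star e = e :=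
  (hstar.2.2 e e (by rw [he, he]) (by rw [he, he])).symm

lemma star_star (s : S) : star (star s) = s :=
  (hstar.2.2 (star s) s (hstar.2.1 s) (hstar.1 s)).symm

lemma idem_star_mul (s : S) : (star s * s) * (star s * s) = star s * s := by
  have h := congrArg (star s * ·) (hstar.1 s)
  simpa only [mul_assoc] using h

lemma idem_mul_star (s : S) : (s * star s) * (s * star s) = s * star s := by
  have h := congrArg (· * star s) (hstar.1 s)
  simpa only [mul_assoc] using h

lemma idem_mul_idem {e f : S} (he : e * e = e) (hf : f * f = f) :
    (e * f) * (e * f) = e * f := by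
  obtain ⟨h1, h2, h3⟩ := hstar
  have hre : ∀ a : S, e * (e * a) = e * a := fun a => by rw [← mul_assoc, he]
  have hrf : ∀ a : S, f * (f * a) = f * a := fun a => by rw [← mul_assoc, hf]
  set x := star (e * f) with hx
  have k1 : e * (f * (x * (e * f))) = e * f := by
    simpa only [mul_assoc] using h1 (e * f)
  have k2' : x * (e * (f * (x * e))) = x * e := by
    simpa only [mul_assoc] using congrArg (· * e) (h2 (e * f))
  have c1 : (e * f) * (f * x * e) * (e * f) = e * f := by
    simp only [mul_assoc]
    rw [hrf, hre]
    exact k1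
  have c2 : (f * x * e) * (e * f) * (f * x * e) = f * x * e := by
    simp only [mul_assoc]
    rw [hre, hrf, k2']
  have hfxe : f * x * e = x := h3 (e * f) (f * x * e) c1 c2
  have hxx : x * x = x := by
    rw [← hfxe]
    simp only [mul_assoc]
    rw [k2']
  have hss : e * f = star x := by
    have := h3 (star (e * f)) (e * f) (h2 (e * f)) (h1 (e * f))
    rw [this, ← hx]
  rw [hss, star_idem ⟨h1, h2, h3⟩ hxx, hxx]

lemma idem_comm {e f : S} (he : e * e = e) (hf : f * f = f) : e * f = f * e := by
  have hef := idem_mul_idem hstar he hf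
  have hfe := idem_mul_idem hstar hf he
  have hre : ∀ a : S, e * (e * a) = e * a := fun a => by rw [← mul_assoc, he]
  have hrf : ∀ a : S, f * (f * a) = f * a := fun a => by rw [← mul_assoc, hf]
  have c1 : (e * f) * (f * e) * (e * f) = e * f := by
    simp only [mul_assoc]
    rw [hrf, hre]
    simpa only [mul_assoc] using hef
  have c2 : (f * e) * (e * f) * (f * e) = f * e := by
    simp only [mul_assoc]
    rw [hre, hrf]
    simpa only [mul_assoc] using hfe
  have := hstar.2.2 (e * f) (f * e) c1 c2
  rw [this, star_idem hstar hef]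

lemma star_idem_mul {f : S} (hf : f * f = f) (t : S) : star (f * t) = star t * f := by
  have hrf : ∀ a : S, f * (f * a) = f * a := fun a => by rw [← mul_assoc, hf]
  have comm' : ∀ c : S, f * (t * (star t * c)) = t * (star t * (f * c)) := fun c => by
    simpa only [mul_assoc] using
      congrArg (· * c) (idem_comm hstar hf (idem_mul_star hstar t))
  have h1' : t * (star t * t) = t := by simpa only [mul_assoc] using hstar.1 t
  have h2' : ∀ c : S, star t * (t * (star t * c)) = star t * c := fun c => by
    simpa only [mul_assoc] using congrArg (· * c) (hstar.2.1 t)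
  have c1 : (f * t) * (star t * f) * (f * t) = f * t := by
    simp only [mul_assoc]
    rw [hrf, comm', hrf, ← comm', h1']
  have c2 : (star t * f) * (f * t) * (star t * f) = star t * f := by
    simp only [mul_assoc]
    rw [hrf, comm', hf, h2']
  exact (hstar.2.2 (f * t) (star t * f) c1 c2).symm

lemma star_mul_idem {e : S} (he : e * e = e) (t : S) : star (t * e) = e * star t := by
  have hre : ∀ a : S, e * (e * a) = e * a := fun a => by rw [← mul_assoc, he]
  have comm' : ∀ c : S, e * (star t * (t * c)) = star t * (t * (e * c)) := fun c => by
    simpa only [mul_assoc] using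
      congrArg (· * c) (idem_comm hstar he (idem_star_mul hstar t))
  have h1' : ∀ c : S, t * (star t * (t * c)) = t * c := fun c => by
    simpa only [mul_assoc] using congrArg (· * c) (hstar.1 t)
  have h2'' : star t * (t * star t) = star t := by
    simpa only [mul_assoc] using hstar.2.1 t
  have c1 : (t * e) * (e * star t) * (t * e) = t * e := by
    simp only [mul_assoc]
    rw [hre, comm', he, h1']
  have c2 : (e * star t) * (t * e) * (e * star t) = e * star t := by
    simp only [mul_assoc]
    rw [hre, comm', hre, ← comm', h2'']
  exact (hstar.2.2 (t * e) (e * star t) c1 c2).symm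

end SG

section Ring
variable {𝓡 : S → AddSubgroup R}

lemma sumProd_le (hsys : IsSystem 𝓡) (s t : S) : sumProd (𝓡 s) (𝓡 t) ≤ 𝓡 (s * t) := by
  refine (AddSubgroup.closure_le _).mpr ?_
  exact Set.mul_subset_iff.mpr fun x hx y hy => hsys.2 s t x hx y hy

lemma le_sysZero {e : S} (he : e * e = e) : 𝓡 e ≤ sysZero 𝓡 :=
  le_iSup₂ (f := fun (e : S) (_ : e ∈ {e : S | e * e = e}) => 𝓡 e) e he

lemma exists_rep (hsys : IsSystem 𝓡) (a : R) :
    ∃ l : List (S × R), (∀ p ∈ l, p.2 ∈ 𝓡 p.1) ∧ (l.map Prod.snd).sum = a := by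
  have : a ∈ (⊤ : AddSubgroup R) := trivial
  rw [← hsys.1] at this
  refine AddSubgroup.iSup_induction (x := a) 𝓡 this ?_ ?_ ?_
  · exact fun s x hx => ⟨[(s, x)], by
      intro p hp
      rw [List.mem_singleton] at hp
      subst hp
      exact hx, by simp⟩
  · exact ⟨[], by simp, by simp⟩
  · rintro x y ⟨l1, h1, hs1⟩ ⟨l2, h2, hs2⟩
    exact ⟨l1 ++ l2, by
      intro p hp
      rcases List.mem_append.mp hp with h | h
      exacts [h1 p h, h2 p h], by simp [hs1, hs2]⟩

omit [Semigroup S] in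
lemma sum_map_mul_left (l : List (S × R)) (c : R) :
    (l.map fun p => c * p.2).sum = c * (l.map Prod.snd).sum := by
  induction l with
  | nil => simp
  | cons q t ih => simp [ih, mul_add]

omit [Semigroup S] in
lemma sum_map_mul_right (l : List (S × R)) (c : R) :
    (l.map fun p => p.2 * c).sum = (l.map Prod.snd).sum * c := by
  induction l with
  | nil => simp
  | cons q t ih => simp [ih, add_mul]

omit [Semigroup S] in
lemma sum_map_sub_left (l : List (S × R)) (c : R) :
    (l.map fun p => p.2 - c * p.2).sum = (l.map Prod.snd).sum - c * (l.map Prod.snd).sum := by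
  induction l with
  | nil => simp
  | cons q t ih => simp only [List.map_cons, List.sum_cons, ih, mul_add]; abel

omit [Semigroup S] in
lemma sum_map_sub_right (l : List (S × R)) (c : R) :
    (l.map fun p => p.2 - p.2 * c).sum = (l.map Prod.snd).sum - (l.map Prod.snd).sum * c := by
  induction l with
  | nil => simp
  | cons q t ih => simp only [List.map_cons, List.sum_cons, ih, add_mul]; abel

omit [Semigroup S] in
lemma sum_map_comm (l : List (S × R)) (z : R) :
    (l.map fun p => p.2 * z - z * p.2).sum
      = (l.map Prod.snd).sum * z - z * (l.map Prod.snd).sum := by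
  induction l with
  | nil => simp
  | cons q t ih => simp only [List.map_cons, List.sum_cons, ih, add_mul, mul_add]; abel

variable {star : S → S}

lemma le_of_idem_left (hstar : IsInverseStar star) (hcoh : Coherent star 𝓡)
    {f : S} (hf : f * f = f) (t : S) : 𝓡 (f * t) ≤ 𝓡 t := by
  apply hcoh (f * t) t
  rw [star_idem_mul hstar hf t]
  have hrf : ∀ a : S, f * (f * a) = f * a := fun a => by rw [← mul_assoc, hf]
  have comm' : ∀ c : S, f * (t * (star t * c)) = t * (star t * (f * c)) := fun c => by
    simpa only [mul_assoc] using
      congrArg (· * c) (idem_comm hstar hf (idem_mul_star hstar t))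
  have h1' : t * (star t * t) = t := by simpa only [mul_assoc] using hstar.1 t
  symm
  simp only [mul_assoc]
  rw [hrf, ← comm', h1']

lemma le_of_idem_right (hstar : IsInverseStar star) (hcoh : Coherent star 𝓡)
    {e : S} (he : e * e = e) (t : S) : 𝓡 (t * e) ≤ 𝓡 t := by
  apply hcoh (t * e) t
  rw [star_mul_idem hstar he t]
  have comm' : ∀ c : S, e * (star t * (t * c)) = star t * (t * (e * c)) := fun c => by
    simpa only [mul_assoc] using
      congrArg (· * c) (idem_comm hstar he (idem_star_mul hstar t))
  have h1' : ∀ c : S, t * (star t * (t * c)) = t * c := fun c => by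
    simpa only [mul_assoc] using congrArg (· * c) (hstar.1 t)
  symm
  simp only [mul_assoc]
  rw [comm', he, h1']

lemma mul_sysZero_mem (hstar : IsInverseStar star) (hcoh : Coherent star 𝓡)
    (hsys : IsSystem 𝓡) {t : S} {r : R} (hr : r ∈ 𝓡 t)
    {z : R} (hz : z ∈ sysZero 𝓡) : r * z ∈ 𝓡 t ∧ z * r ∈ 𝓡 t := by
  have hK : sysZero 𝓡 ≤
      (𝓡 t).comap (AddMonoidHom.mulLeft r) ⊓ (𝓡 t).comap (AddMonoidHom.mulRight r) := by
    refine iSup₂_le fun e he => fun x hx => ?_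
    refine AddSubgroup.mem_inf.mpr ⟨?_, ?_⟩
    · simp only [AddSubgroup.mem_comap, AddMonoidHom.coe_mulLeft]
      exact le_of_idem_right hstar hcoh he t (hsys.2 t e r hr x hx)
    · simp only [AddSubgroup.mem_comap, AddMonoidHom.coe_mulRight]
      exact le_of_idem_left hstar hcoh he t (hsys.2 e t x hx r hr)
  have := AddSubgroup.mem_inf.mp (hK hz)
  simpa only [AddSubgroup.mem_comap, AddMonoidHom.coe_mulLeft,
    AddMonoidHom.coe_mulRight] using this

end Ring
end Lemmas

section Core
variable {S R : Type*} [Semigroup S] [NonUnitalRing R] {star : S → S} {𝓡 : S → AddSubgroup R}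

lemma core_IIP (hstar : IsInverseStar star) (hsys : IsSystem 𝓡) (hcoh : Coherent star 𝓡)
    (hse : LeftSEps star 𝓡 ∨ RightSEps star 𝓡) : IIPCentCenterZero 𝓡 := by
  classical
  intro I hI hIne
  have hex : ∃ a : R, a ∈ I ∧ a ≠ 0 := by
    by_contra h
    push_neg at h
    exact hIne ((AddSubgroup.eq_bot_iff_forall I).mpr h)
  set P : ℕ → Prop := fun n => ∃ a : R, a ∈ I ∧ a ≠ 0 ∧ ∃ l : List (S × R),
      l.length = n ∧ (∀ p ∈ l, p.2 ∈ 𝓡 p.1) ∧ (l.map Prod.snd).sum = a with hPdef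
  have hP : ∃ n, P n := by
    obtain ⟨a, haI, ha0⟩ := hex
    obtain ⟨l, hm, hs⟩ := exists_rep hsys a
    exact ⟨l.length, a, haI, ha0, l, rfl, hm, hs⟩
  obtain ⟨a, haI, ha0, l, hlen, hmem, hsuml⟩ := Nat.find_spec hP
  have hmin : ∀ m, m < Nat.find hP → ¬ P m := fun m hm => Nat.find_min hP hm
  rcases l with _ | ⟨⟨s₀, r₀⟩, l'⟩
  · simp only [List.map_nil, List.sum_nil] at hsuml
    exact absurd hsuml.symm ha0
  have hT : r₀ + (l'.map Prod.snd).sum = a := by simpa using hsuml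
  set T := (l'.map Prod.snd).sum with hTdef
  have hlt : l'.length < Nat.find hP := by
    simp only [List.length_cons] at hlen
    omega
  have hnotP : ¬ P l'.length := hmin _ hlt
  have hr₀mem : r₀ ∈ 𝓡 s₀ := hmem (s₀, r₀) List.mem_cons_self
  have hmem' : ∀ p ∈ l', p.2 ∈ 𝓡 p.1 := fun p hp => hmem p (List.mem_cons_of_mem _ hp)
  have hr₀ : r₀ ≠ 0 := by
    intro h0
    exact hnotP ⟨a, haI, ha0, l', rfl, hmem', by rw [← hT, h0, zero_add]⟩
  obtain ⟨b, hbI, hb0, e, he, y, hy, lr, hlrmem, hlrlen, hsumb⟩ :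
      ∃ b : R, b ∈ I ∧ b ≠ 0 ∧ ∃ e : S, e * e = e ∧ ∃ y ∈ 𝓡 e, ∃ lr : List (S × R),
        (∀ p ∈ lr, p.2 ∈ 𝓡 p.1) ∧ lr.length = l'.length ∧
          y + (lr.map Prod.snd).sum = b := by
    rcases hse with hle | hre
    · obtain ⟨ε, hεmem, hεr⟩ := hle s₀ r₀ hr₀mem
      have hεf : ε ∈ 𝓡 (s₀ * star s₀) := sumProd_le hsys _ _ hεmem
      have hf := idem_mul_star hstar s₀
      have hstep : ∃ v ∈ 𝓡 (star s₀), v * a ≠ 0 := by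
        by_contra hall
        push_neg at hall
        have hεa : ε * a = 0 := by
          have hK : sumProd (𝓡 s₀) (𝓡 (star s₀)) ≤
              (⊥ : AddSubgroup R).comap (AddMonoidHom.mulRight a) := by
            refine (AddSubgroup.closure_le _).mpr
              (Set.mul_subset_iff.mpr fun u hu v hv => ?_)
            simp only [SetLike.mem_coe, AddSubgroup.mem_comap, AddMonoidHom.coe_mulRight, AddSubgroup.mem_bot]
            rw [mul_assoc, hall v hv, mul_zero]
          simpa using hK hεmem
        have h1 : ε * r₀ + ε * T = 0 := by rw [← mul_add, hT, hεa]
        rw [hεr] at h1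
        have h2 : ε * T = -r₀ := by rwa [add_comm, add_eq_zero_iff_eq_neg] at h1
        refine hnotP ⟨a, haI, ha0, l'.map (fun p => (p.1, p.2 - ε * p.2)), by simp, ?_, ?_⟩
        · intro p hp
          simp only [List.mem_map] at hp
          obtain ⟨q, hq, rfl⟩ := hp
          exact sub_mem (hmem' q hq)
            (le_of_idem_left hstar hcoh hf q.1 (hsys.2 _ _ _ hεf _ (hmem' q hq)))
        · have hss : ((l'.map fun p => (p.1, p.2 - ε * p.2)).map Prod.snd).sum
              = T - ε * T := by
            simpa [Function.comp_def] using sum_map_sub_left l' ε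
          rw [hss, h2, ← hT]
          abel
      obtain ⟨v, hv, hva⟩ := hstep
      refine ⟨v * a, (hI v a haI).1, hva, star s₀ * s₀, idem_star_mul hstar s₀,
        v * r₀, hsys.2 _ _ _ hv _ hr₀mem,
        l'.map (fun p => (star s₀ * p.1, v * p.2)), ?_, by simp, ?_⟩
      · intro p hp
        simp only [List.mem_map] at hp
        obtain ⟨q, hq, rfl⟩ := hp
        exact hsys.2 _ _ _ hv _ (hmem' q hq)
      · have hss : ((l'.map fun p => (star s₀ * p.1, v * p.2)).map Prod.snd).sum
            = v * T := by
          simpa [Function.comp_def] using sum_map_mul_left l' v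
        rw [hss, ← mul_add, hT]
    · obtain ⟨ε, hεmem, hεr⟩ := hre s₀ r₀ hr₀mem
      have hεf : ε ∈ 𝓡 (star s₀ * s₀) := sumProd_le hsys _ _ hεmem
      have hf := idem_star_mul hstar s₀
      have hstep : ∃ v ∈ 𝓡 (star s₀), a * v ≠ 0 := by
        by_contra hall
        push_neg at hall
        have hεa : a * ε = 0 := by
          have hK : sumProd (𝓡 (star s₀)) (𝓡 s₀) ≤
              (⊥ : AddSubgroup R).comap (AddMonoidHom.mulLeft a) := by
            refine (AddSubgroup.closure_le _).mpr
              (Set.mul_subset_iff.mpr fun u hu v hv => ?_)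
            simp only [SetLike.mem_coe, AddSubgroup.mem_comap, AddMonoidHom.coe_mulLeft, AddSubgroup.mem_bot]
            rw [← mul_assoc, hall u hu, zero_mul]
          simpa using hK hεmem
        have h1 : r₀ * ε + T * ε = 0 := by rw [← add_mul, hT, hεa]
        rw [hεr] at h1
        have h2 : T * ε = -r₀ := by rwa [add_comm, add_eq_zero_iff_eq_neg] at h1
        refine hnotP ⟨a, haI, ha0, l'.map (fun p => (p.1, p.2 - p.2 * ε)), by simp, ?_, ?_⟩
        · intro p hp
          simp only [List.mem_map] at hp
          obtain ⟨q, hq, rfl⟩ := hp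
          exact sub_mem (hmem' q hq)
            (le_of_idem_right hstar hcoh hf q.1 (hsys.2 _ _ _ (hmem' q hq) _ hεf))
        · have hss : ((l'.map fun p => (p.1, p.2 - p.2 * ε)).map Prod.snd).sum
              = T - T * ε := by
            simpa [Function.comp_def] using sum_map_sub_right l' ε
          rw [hss, h2, ← hT]
          abel
      obtain ⟨v, hv, hva⟩ := hstep
      refine ⟨a * v, (hI v a haI).2, hva, s₀ * star s₀, idem_mul_star hstar s₀,
        r₀ * v, hsys.2 _ _ _ hr₀mem _ hv,
        l'.map (fun p => (p.1 * star s₀, p.2 * v)), ?_, by simp, ?_⟩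
      · intro p hp
        simp only [List.mem_map] at hp
        obtain ⟨q, hq, rfl⟩ := hp
        exact hsys.2 _ _ _ (hmem' q hq) _ hv
      · have hss : ((l'.map fun p => (p.1 * star s₀, p.2 * v)).map Prod.snd).sum
            = T * v := by
          simpa [Function.comp_def] using sum_map_mul_right l' v
        rw [hss, ← add_mul, hT]
  refine ⟨b, hb0, hbI, ?_⟩
  intro z hz
  obtain ⟨hz0, hzc⟩ := hz
  have hyz : y * z = z * y := (hzc y (le_sysZero he hy)).symm
  set Tb := (lr.map Prod.snd).sum with hTbdef
  have hcI : b * z - z * b ∈ I := sub_mem (hI z b hbI).2 (hI z b hbI).1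
  have hcrep : ((lr.map fun p => (p.1, p.2 * z - z * p.2)).map Prod.snd).sum
      = b * z - z * b := by
    have hss : ((lr.map fun p => (p.1, p.2 * z - z * p.2)).map Prod.snd).sum
        = Tb * z - z * Tb := by
      simpa [Function.comp_def] using sum_map_comm lr z
    rw [hss, ← hsumb, add_mul, mul_add, hyz]
    abel
  have hc0 : b * z - z * b = 0 := by
    by_contra hc
    refine hnotP ⟨b * z - z * b, hcI, hc,
      lr.map (fun p => (p.1, p.2 * z - z * p.2)), by simp [hlrlen], ?_, hcrep⟩
    intro p hp
    simp only [List.mem_map] at hp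
    obtain ⟨q, hq, rfl⟩ := hp
    exact sub_mem (mul_sysZero_mem hstar hcoh hsys (hlrmem q hq) hz0).1
      (mul_sysZero_mem hstar hcoh hsys (hlrmem q hq) hz0).2
  exact sub_eq_zero.mp hc0

end Core

/-- If `S` is an inverse semigroup and `R` is a coherent,
left (respectively right) s-unital epsilon-strong system over `S`, then `R` is left
(respectively right) non-degenerate, and the ring extension `R / C_R(Z(R₀))` has the
ideal intersection property. -/
theorem stmt4 {S R : Type*} [Semigroup S] [NonUnitalRing R]
    (star : S → S) (hstar : IsInverseStar star)
    (𝓡 : S → AddSubgroup R) (hsys : IsSystem 𝓡)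
    (hcoh : Coherent star 𝓡) :
    (LeftSEps star 𝓡 → LeftNonDeg 𝓡 ∧ IIPCentCenterZero 𝓡) ∧
    (RightSEps star 𝓡 → RightNonDeg 𝓡 ∧ IIPCentCenterZero 𝓡) := by
  constructor
  · intro hle
    refine ⟨?_, core_IIP hstar hsys hcoh (Or.inl hle)⟩
    intro e he r hr hr0
    obtain ⟨ε, hεmem, hεr⟩ := hle e r hr
    have hεe : ε ∈ 𝓡 e := by
      have h := sumProd_le hsys e (star e) hεmem
      rwa [star_idem hstar he, he] at h
    exact ⟨e, by rw [he, he], ε, hεe, by rw [hεr]; exact hr0⟩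
  · intro hre
    refine ⟨?_, core_IIP hstar hsys hcoh (Or.inr hre)⟩
    intro e he r hr hr0
    obtain ⟨ε, hεmem, hεr⟩ := hre e r hr
    have hεe : ε ∈ 𝓡 e := by
      have h := sumProd_le hsys (star e) e hεmem
      rwa [star_idem hstar he, he] at h
    exact ⟨e, by rw [he, he], ε, hεe, by rw [hεr]; exact hr0⟩

end PaperSys
end

section
/- Let S be an inverse semigroup and let R be a system over S. Then R is left unital epsilon-strong (i.e. for every s ∈ S there exists ε_s ∈ R_s R_{s*} with ε_s r = r for all r ∈ R_s) if and only if R is symmetric and for every s ∈ S the ring R_s R_{s*} is left unital. Analogously, R is right unital epsilon-strong (i.e. for every s ∈ S there exists ε'_s ∈ R_{s*} R_s with r ε'_s = r for all r ∈ R_s) if and only if R is symmetric and for every s ∈ S the ring R_{s*} R_s is right unital. -/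
open Pointwise

namespace PaperSys

variable {S R : Type*} [Semigroup S] [NonUnitalRing R]

lemma mul_mem_sumProd {A B : AddSubgroup R} {x y : R} (hx : x ∈ A) (hy : y ∈ B) :
    x * y ∈ sumProd A B :=
  AddSubgroup.subset_closure (Set.mul_mem_mul hx hy)

lemma sumProd_le_s6 {A B C : AddSubgroup R} (h : ∀ x ∈ A, ∀ y ∈ B, x * y ∈ C) :
    sumProd A B ≤ C :=
  (AddSubgroup.closure_le C).mpr (Set.mul_subset_iff.mpr h)

lemma mul_eq_on_sumProd {A B : AddSubgroup R} {ε : R}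
    (h : ∀ x ∈ A, ∀ y ∈ B, ε * (x * y) = x * y) :
    ∀ r ∈ sumProd A B, ε * r = r := by
  intro r hr
  refine AddSubgroup.closure_induction (p := fun r _ => ε * r = r) ?_ ?_ ?_ ?_ hr
  · rintro _ ⟨x, hx, y, hy, rfl⟩; exact h x hx y hy
  · exact mul_zero ε
  · intro x y _ _ hx hy; rw [mul_add, hx, hy]
  · intro x _ hx; rw [mul_neg, hx]

lemma eq_on_sumProd_mul {A B : AddSubgroup R} {ε : R}
    (h : ∀ x ∈ A, ∀ y ∈ B, (x * y) * ε = x * y) :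
    ∀ r ∈ sumProd A B, r * ε = r := by
  intro r hr
  refine AddSubgroup.closure_induction (p := fun r _ => r * ε = r) ?_ ?_ ?_ ?_ hr
  · rintro _ ⟨x, hx, y, hy, rfl⟩; exact h x hx y hy
  · exact zero_mul ε
  · intro x y _ _ hx hy; rw [add_mul, hx, hy]
  · intro x _ hx; rw [neg_mul, hx]

lemma sumProd_assoc_le {A B C : AddSubgroup R} :
    sumProd (sumProd A B) C ≤ sumProd A (sumProd B C) := by
  refine sumProd_le_s6 fun m hm c hc => ?_
  refine AddSubgroup.closure_induction
    (p := fun m _ => m * c ∈ sumProd A (sumProd B C)) ?_ ?_ ?_ ?_ hm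
  · rintro _ ⟨a, ha, b, hb, rfl⟩
    rw [mul_assoc]; exact mul_mem_sumProd ha (mul_mem_sumProd hb hc)
  · show (0:R) * c ∈ _; rw [zero_mul]; exact zero_mem _
  · intro x y _ _ hx hy; rw [add_mul]; exact add_mem hx hy
  · intro x _ hx; rw [neg_mul]; exact neg_mem hx

lemma sumProd_assoc_ge {A B C : AddSubgroup R} :
    sumProd A (sumProd B C) ≤ sumProd (sumProd A B) C := by
  refine sumProd_le_s6 fun a ha m hm => ?_
  refine AddSubgroup.closure_induction
    (p := fun m _ => a * m ∈ sumProd (sumProd A B) C) ?_ ?_ ?_ ?_ hm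
  · rintro _ ⟨b, hb, c, hc, rfl⟩
    rw [← mul_assoc]; exact mul_mem_sumProd (mul_mem_sumProd ha hb) hc
  · show a * (0:R) ∈ _; rw [mul_zero]; exact zero_mem _
  · intro x y _ _ hx hy; rw [mul_add]; exact add_mem hx hy
  · intro x _ hx; rw [mul_neg]; exact neg_mem hx

/-- Let `S` be an inverse semigroup and `R` a system over `S`.
Then `R` is left unital epsilon-strong iff `R` is symmetric and for every `s`
the ring `R_s R_{s*}` is left unital; and `R` is right unital epsilon-strong
iff `R` is symmetric and for every `s` the ring `R_{s*} R_s` is right unital. -/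
theorem stmt6 {S R : Type*} [Semigroup S] [NonUnitalRing R]
    (star : S → S) (hstar : IsInverseStar star)
    (𝓡 : S → AddSubgroup R) (hsys : IsSystem 𝓡) :
    ((∀ s : S, ∃ ε ∈ sumProd (𝓡 s) (𝓡 (star s)), ∀ r ∈ 𝓡 s, ε * r = r) ↔
      IsSymmetricSys star 𝓡 ∧
        ∀ s : S, ∃ e ∈ sumProd (𝓡 s) (𝓡 (star s)),
          ∀ a ∈ sumProd (𝓡 s) (𝓡 (star s)), e * a = a) ∧
    ((∀ s : S, ∃ ε' ∈ sumProd (𝓡 (star s)) (𝓡 s), ∀ r ∈ 𝓡 s, r * ε' = r) ↔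
      IsSymmetricSys star 𝓡 ∧
        ∀ s : S, ∃ f ∈ sumProd (𝓡 (star s)) (𝓡 s),
          ∀ a ∈ sumProd (𝓡 (star s)) (𝓡 s), a * f = a) := by
  have trip_le : ∀ s : S, sumProd (sumProd (𝓡 s) (𝓡 (star s))) (𝓡 s) ≤ 𝓡 s := by
    intro s
    have hss : sumProd (𝓡 s) (𝓡 (star s)) ≤ 𝓡 (s * star s) :=
      sumProd_le_s6 fun x hx y hy => hsys.2 s (star s) x hx y hy
    refine sumProd_le_s6 fun a ha x hx => ?_
    have := hsys.2 (s * star s) s a (hss ha) x hx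
    rwa [hstar.1 s] at this
  constructor
  · constructor
    · intro h
      constructor
      · intro s
        obtain ⟨ε, hε, hεr⟩ := h s
        refine le_antisymm (trip_le s) fun r hr => ?_
        rw [← hεr r hr]
        exact mul_mem_sumProd hε hr
      · intro s
        obtain ⟨ε, hε, hεr⟩ := h s
        exact ⟨ε, hε, mul_eq_on_sumProd fun x hx y hy => by
          rw [← mul_assoc, hεr x hx]⟩
    · rintro ⟨hsym, hu⟩ s
      obtain ⟨e, he, hea⟩ := hu s
      refine ⟨e, he, fun r hr => ?_⟩
      have hr' : r ∈ sumProd (sumProd (𝓡 s) (𝓡 (star s))) (𝓡 s) := (hsym s).ge hr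
      exact mul_eq_on_sumProd (fun a ha x hx => by rw [← mul_assoc, hea a ha]) r hr'
  · constructor
    · intro h
      constructor
      · intro s
        obtain ⟨ε, hε, hεr⟩ := h s
        refine le_antisymm (trip_le s) fun r hr => ?_
        rw [← hεr r hr]
        exact sumProd_assoc_ge (mul_mem_sumProd hr hε)
      · intro s
        obtain ⟨ε, hε, hεr⟩ := h s
        exact ⟨ε, hε, eq_on_sumProd_mul fun x hx y hy => by
          rw [mul_assoc, hεr y hy]⟩
    · rintro ⟨hsym, hu⟩ s
      obtain ⟨f, hf, haf⟩ := hu s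
      refine ⟨f, hf, fun r hr => ?_⟩
      have hr' : r ∈ sumProd (𝓡 s) (sumProd (𝓡 (star s)) (𝓡 s)) :=
        sumProd_assoc_le ((hsym s).ge hr)
      exact eq_on_sumProd_mul (fun x hx m hm => by rw [mul_assoc, haf m hm]) r hr'


end PaperSys
end

section
/- Let S be an inverse semigroup and let R be a system over S. Then the following are equivalent: (i) R is unital epsilon-strong, i.e. for every s ∈ S the module R_s is unital both as a left R_s R_{s*}-module and as a right R_{s*} R_s-module; (ii) R is symmetric and for every s ∈ S the ring R_s R_{s*} is unital; (iii) for every s ∈ S there exists ε_s ∈ R_s R_{s*} such that for all r ∈ R_s one has ε_s r = r and r ε_{s*} = r (where ε_{s*} ∈ R_{s*} R_s is the element associated to s*). -/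
open Pointwise

namespace PaperSys

variable {S R : Type*} [Semigroup S] [NonUnitalRing R]

section Aux

lemma mem_sumProd {A B : AddSubgroup R} {a b : R} (ha : a ∈ A) (hb : b ∈ B) :
    a * b ∈ sumProd A B :=
  AddSubgroup.subset_closure (Set.mul_mem_mul ha hb)

lemma sumProd_induction {A B : AddSubgroup R} {p : R → Prop} {x : R}
    (hx : x ∈ sumProd A B)
    (mem : ∀ a ∈ A, ∀ b ∈ B, p (a * b)) (zero : p 0)
    (add : ∀ x y, p x → p y → p (x + y)) (neg : ∀ x, p x → p (-x)) : p x := by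
  induction hx using AddSubgroup.closure_induction with
  | mem x hx =>
    obtain ⟨a, ha, b, hb, rfl⟩ := hx
    exact mem a ha b hb
  | zero => exact zero
  | add x y _ _ hx hy => exact add x y hx hy
  | neg x _ hx => exact neg x hx

variable {star : S → S} {𝓡 : S → AddSubgroup R}

lemma starstar (hstar : IsInverseStar star) (s : S) : star (star s) = s :=
  (hstar.2.2 (star s) s (hstar.2.1 s) (hstar.1 s)).symm

lemma threeprod (hstar : IsInverseStar star) (hsys : IsSystem 𝓡) {s : S} {x y z : R}
    (hx : x ∈ 𝓡 s) (hy : y ∈ 𝓡 (star s)) (hz : z ∈ 𝓡 s) : x * y * z ∈ 𝓡 s := by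
  have h2 := hsys.2 _ s _ (hsys.2 s (star s) x hx y hy) z hz
  rwa [hstar.1 s] at h2

lemma d_mul_mem (hstar : IsInverseStar star) (hsys : IsSystem 𝓡) {s : S} {d r : R}
    (hd : d ∈ sumProd (𝓡 s) (𝓡 (star s))) (hr : r ∈ 𝓡 s) : d * r ∈ 𝓡 s := by
  refine sumProd_induction (p := fun d => d * r ∈ 𝓡 s) hd ?_ ?_ ?_ ?_
  · intro a ha b hb
    rw [mul_assoc, ← mul_assoc]
    exact threeprod hstar hsys ha hb hr
  · simp only [zero_mul]; exact zero_mem _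
  · intro x y hx hy; rw [add_mul]; exact add_mem hx hy
  · intro x hx; rw [neg_mul]; exact neg_mem hx

lemma mul_d_mem (hstar : IsInverseStar star) (hsys : IsSystem 𝓡) {s : S} {r d : R}
    (hr : r ∈ 𝓡 (star s)) (hd : d ∈ sumProd (𝓡 s) (𝓡 (star s))) : r * d ∈ 𝓡 (star s) := by
  refine sumProd_induction (p := fun d => r * d ∈ 𝓡 (star s)) hd ?_ ?_ ?_ ?_
  · intro a ha b hb
    rw [← mul_assoc]
    have h2 := hsys.2 _ (star s) _ (hsys.2 (star s) s r hr a ha) b hb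
    rwa [hstar.2.1 s] at h2
  · simp only [mul_zero]; exact zero_mem _
  · intro x y hx hy; rw [mul_add]; exact add_mem hx hy
  · intro x hx; rw [mul_neg]; exact neg_mem hx

lemma d_mul_d (hstar : IsInverseStar star) (hsys : IsSystem 𝓡) {s : S} {d d' : R}
    (hd : d ∈ sumProd (𝓡 s) (𝓡 (star s))) (hd' : d' ∈ sumProd (𝓡 s) (𝓡 (star s))) :
    d * d' ∈ sumProd (𝓡 s) (𝓡 (star s)) := by
  refine sumProd_induction (p := fun d' => d * d' ∈ sumProd (𝓡 s) (𝓡 (star s))) hd' ?_ ?_ ?_ ?_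
  · intro a ha b hb
    rw [← mul_assoc]
    exact mem_sumProd (d_mul_mem hstar hsys hd ha) hb
  · simp only [mul_zero]; exact zero_mem _
  · intro x y hx hy; rw [mul_add]; exact add_mem hx hy
  · intro x hx; rw [mul_neg]; exact neg_mem hx

lemma left_unit_ext {s : S} {e : R} (he : ∀ r ∈ 𝓡 s, e * r = r) :
    ∀ a ∈ sumProd (𝓡 s) (𝓡 (star s)), e * a = a := by
  intro a ha
  refine sumProd_induction (p := fun a => e * a = a) ha ?_ (by simp) ?_ ?_
  · intro x hx y _
    rw [← mul_assoc, he x hx]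
  · intro x y hx hy; rw [mul_add, hx, hy]
  · intro x hx; rw [mul_neg, hx]

lemma right_unit_ext {s : S} {e : R} (he : ∀ r ∈ 𝓡 (star s), r * e = r) :
    ∀ a ∈ sumProd (𝓡 s) (𝓡 (star s)), a * e = a := by
  intro a ha
  refine sumProd_induction (p := fun a => a * e = a) ha ?_ (by simp) ?_ ?_
  · intro x _ y hy
    rw [mul_assoc, he y hy]
  · intro x y hx hy; rw [add_mul, hx, hy]
  · intro x hx; rw [neg_mul, hx]

lemma i_to_iii (hstar : IsInverseStar star) (hsys : IsSystem 𝓡)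
    (h1 : ∀ s : S, ∃ a ∈ sumProd (𝓡 s) (𝓡 (star s)), ∀ r ∈ 𝓡 s, a * r = r)
    (h2 : ∀ s : S, ∃ b ∈ sumProd (𝓡 (star s)) (𝓡 s), ∀ r ∈ 𝓡 s, r * b = r) :
    ∃ ε : S → R, ∀ s : S, ε s ∈ sumProd (𝓡 s) (𝓡 (star s)) ∧
      ∀ r ∈ 𝓡 s, ε s * r = r ∧ r * ε (star s) = r := by
  choose a ha hal using h1
  choose b hb hbr using h2
  refine ⟨fun s => a s + b (star s) - a s * b (star s), fun s => ?_⟩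
  have hbs : b (star s) ∈ sumProd (𝓡 s) (𝓡 (star s)) := by
    have := hb (star s)
    rwa [starstar hstar s] at this
  refine ⟨sub_mem (add_mem (ha s) hbs) (d_mul_d hstar hsys (ha s) hbs), fun r hr => ⟨?_, ?_⟩⟩
  · have hbr' : b (star s) * r ∈ 𝓡 s := d_mul_mem hstar hsys hbs hr
    rw [sub_mul, add_mul, hal s r hr, mul_assoc, hal s _ hbr']
    exact add_sub_cancel_right r _
  · have hss := starstar hstar s
    show r * (a (star s) + b (star (star s)) - a (star s) * b (star (star s))) = r
    rw [hss]
    have hra : r * a (star s) ∈ 𝓡 s := by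
      have hr' : r ∈ 𝓡 (star (star s)) := by rwa [hss]
      have hmm := mul_d_mem hstar hsys hr' (ha (star s))
      rwa [hss] at hmm
    rw [mul_sub, mul_add, hbr s r hr, ← mul_assoc, hbr s _ hra]
    exact add_sub_cancel_left _ r

lemma iii_to_i (hstar : IsInverseStar star)
    (h : ∃ ε : S → R, ∀ s : S, ε s ∈ sumProd (𝓡 s) (𝓡 (star s)) ∧
      ∀ r ∈ 𝓡 s, ε s * r = r ∧ r * ε (star s) = r) :
    ((∀ s : S, ∃ a ∈ sumProd (𝓡 s) (𝓡 (star s)), ∀ r ∈ 𝓡 s, a * r = r) ∧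
      (∀ s : S, ∃ b ∈ sumProd (𝓡 (star s)) (𝓡 s), ∀ r ∈ 𝓡 s, r * b = r)) := by
  obtain ⟨ε, hε⟩ := h
  constructor
  · exact fun s => ⟨ε s, (hε s).1, fun r hr => ((hε s).2 r hr).1⟩
  · intro s
    refine ⟨ε (star s), ?_, fun r hr => ((hε s).2 r hr).2⟩
    have := (hε (star s)).1
    rwa [starstar hstar s] at this

lemma iii_to_ii (hstar : IsInverseStar star) (hsys : IsSystem 𝓡)
    (h : ∃ ε : S → R, ∀ s : S, ε s ∈ sumProd (𝓡 s) (𝓡 (star s)) ∧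
      ∀ r ∈ 𝓡 s, ε s * r = r ∧ r * ε (star s) = r) :
    IsSymmetricSys star 𝓡 ∧
      ∀ s : S, ∃ e ∈ sumProd (𝓡 s) (𝓡 (star s)),
        ∀ a ∈ sumProd (𝓡 s) (𝓡 (star s)), e * a = a ∧ a * e = a := by
  obtain ⟨ε, hε⟩ := h
  have hleft : ∀ s : S, ∀ a ∈ sumProd (𝓡 s) (𝓡 (star s)), ε s * a = a :=
    fun s => left_unit_ext (fun r hr => ((hε s).2 r hr).1)
  have hright : ∀ s : S, ∀ a ∈ sumProd (𝓡 s) (𝓡 (star s)), a * ε s = a := by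
    intro s
    refine right_unit_ext (fun r hr => ?_)
    have := ((hε (star s)).2 r hr).2
    rwa [starstar hstar s] at this
  constructor
  · intro s
    apply le_antisymm
    · refine (AddSubgroup.closure_le _).2 ?_
      rintro x ⟨d, hd, z, hz, rfl⟩
      exact d_mul_mem hstar hsys hd hz
    · intro r hr
      have h2 : ε s * r ∈ sumProd (sumProd (𝓡 s) (𝓡 (star s))) (𝓡 s) :=
        mem_sumProd (hε s).1 hr
      rwa [((hε s).2 r hr).1] at h2
  · exact fun s => ⟨ε s, (hε s).1, fun a ha => ⟨hleft s a ha, hright s a ha⟩⟩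

lemma ii_to_iii (hstar : IsInverseStar star) (hsys : IsSystem 𝓡)
    (hsym : IsSymmetricSys star 𝓡)
    (h : ∀ s : S, ∃ e ∈ sumProd (𝓡 s) (𝓡 (star s)),
        ∀ a ∈ sumProd (𝓡 s) (𝓡 (star s)), e * a = a ∧ a * e = a) :
    ∃ ε : S → R, ∀ s : S, ε s ∈ sumProd (𝓡 s) (𝓡 (star s)) ∧
      ∀ r ∈ 𝓡 s, ε s * r = r ∧ r * ε (star s) = r := by
  choose e he hid using h
  refine ⟨e, fun s => ⟨he s, fun r hr => ⟨?_, ?_⟩⟩⟩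
  · have hr' : r ∈ sumProd (sumProd (𝓡 s) (𝓡 (star s))) (𝓡 s) := by
      rw [hsym s]; exact hr
    refine sumProd_induction (p := fun r => e s * r = r) hr' ?_ (by simp) ?_ ?_
    · intro d hd z _
      rw [← mul_assoc, (hid s d hd).1]
    · intro x y hx hy; rw [mul_add, hx, hy]
    · intro x hx; rw [mul_neg, hx]
  · have hss := starstar hstar s
    have hid' : ∀ a ∈ sumProd (𝓡 (star s)) (𝓡 s), a * e (star s) = a := by
      intro a ha
      have ha' : a ∈ sumProd (𝓡 (star s)) (𝓡 (star (star s))) := by rwa [hss]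
      exact (hid (star s) a ha').2
    have hr' : r ∈ sumProd (sumProd (𝓡 s) (𝓡 (star s))) (𝓡 s) := by
      rw [hsym s]; exact hr
    refine sumProd_induction (p := fun r => r * e (star s) = r) hr' ?_ (by simp) ?_ ?_
    · intro d hd z hz
      refine sumProd_induction (p := fun d => (d * z) * e (star s) = d * z) hd ?_
        (by simp) ?_ ?_
      · intro x _ y hy
        rw [mul_assoc x y z, mul_assoc, hid' _ (mem_sumProd hy hz)]
      · intro u v hu hv
        simp only [add_mul] at hu hv ⊢
        rw [hu, hv]
      · intro u hu
        simp only [neg_mul] at hu ⊢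
        rw [hu]
    · intro x y hx hy; rw [add_mul, hx, hy]
    · intro x hx; rw [neg_mul, hx]

end Aux

/-- Let `S` be an inverse semigroup and `R` a system over `S`.
The following are equivalent: (i) `R` is unital epsilon-strong (for each `s`, `R_s` is
unital as a left `R_s R_{s*}`-module and as a right `R_{s*} R_s`-module);
(ii) `R` is symmetric and every ring `R_s R_{s*}` is unital;
(iii) there is a choice `s ↦ ε_s ∈ R_s R_{s*}` such that `ε_s r = r` and
`r ε_{s*} = r` for all `r ∈ R_s`. -/
theorem stmt7 {S R : Type*} [Semigroup S] [NonUnitalRing R]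
    (star : S → S) (hstar : IsInverseStar star)
    (𝓡 : S → AddSubgroup R) (hsys : IsSystem 𝓡) :
    (((∀ s : S, ∃ a ∈ sumProd (𝓡 s) (𝓡 (star s)), ∀ r ∈ 𝓡 s, a * r = r) ∧
      (∀ s : S, ∃ b ∈ sumProd (𝓡 (star s)) (𝓡 s), ∀ r ∈ 𝓡 s, r * b = r)) ↔
      (IsSymmetricSys star 𝓡 ∧
        ∀ s : S, ∃ e ∈ sumProd (𝓡 s) (𝓡 (star s)),
          ∀ a ∈ sumProd (𝓡 s) (𝓡 (star s)), e * a = a ∧ a * e = a)) ∧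
    ((IsSymmetricSys star 𝓡 ∧
        ∀ s : S, ∃ e ∈ sumProd (𝓡 s) (𝓡 (star s)),
          ∀ a ∈ sumProd (𝓡 s) (𝓡 (star s)), e * a = a ∧ a * e = a) ↔
      (∃ ε : S → R, ∀ s : S, ε s ∈ sumProd (𝓡 s) (𝓡 (star s)) ∧
        ∀ r ∈ 𝓡 s, ε s * r = r ∧ r * ε (star s) = r)) := by
  constructor
  · constructor
    · intro h
      exact iii_to_ii hstar hsys (i_to_iii hstar hsys h.1 h.2)
    · intro h
      exact iii_to_i hstar (ii_to_iii hstar hsys h.1 h.2)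
  · constructor
    · intro h
      exact ii_to_iii hstar hsys h.1 h.2
    · intro h
      exact iii_to_ii hstar hsys h

end PaperSys
end
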